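/- Every full triangle functor between triangulated categories is objective. -/

import Mathlib

open CategoryTheory CategoryTheory.Limits CategoryTheory.Pretriangulated

universe v₁ v₂ u₁ u₂

variable {A : Type u₁} {B : Type u₂} [Category.{v₁} A] [Category.{v₂} B]
  [Preadditive A] [Preadditive B] [HasZeroObject A] [HasZeroObject B]
  [HasShift A ℤ] [HasShift B ℤ]
  [∀ n : ℤ, (shiftFunctor A n).Additive] [∀ n : ℤ, (shiftFunctor B n).Additive]
  [Pretriangulated A] [Pretriangulated B] [IsTriangulated A] [IsTriangulated B]


/-- Every full triangle functor between triangulated categories is objective. -/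
theorem stmt12 (F : A ⥤ B) [F.CommShift ℤ] [F.IsTriangulated] [F.Full] :
    ∀ (X Y : A) (f : X ⟶ Y), F.map f = 0 →
      ∃ (K : A) (g : X ⟶ K) (h : K ⟶ Y), IsZero (F.obj K) ∧ f = g ≫ h := by
  intro X Y f hf
  -- complete f to a triangle Z → X → Y
  obtain ⟨Z, u, v, hT⟩ := distinguished_cocone_triangle₁ f
  -- image triangle is distinguished
  have hFT := F.map_distinguished _ hT
  -- 𝟙 (F X) factors through F u since (𝟙) ≫ F f = 0
  obtain ⟨t, ht⟩ := Triangle.coyoneda_exact₂ _ hFT (𝟙 (F.obj X))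
    (by change 𝟙 (F.obj X) ≫ F.map f = 0; rw [Category.id_comp, hf])
  obtain ⟨c, rfl⟩ := F.map_surjective t
  set e : X ⟶ X := c ≫ u with he
  have hFe : F.map e = 𝟙 (F.obj X) := by
    exact (F.map_comp c u).trans ht.symm
  have hef : e ≫ f = 0 := by
    have huf : u ≫ f = 0 := comp_distTriang_mor_zero₁₂ _ hT
    exact (Category.assoc c u f).trans ((congrArg (fun g => c ≫ g) huf).trans comp_zero)
  -- complete e to a triangle X → X → K
  obtain ⟨K, p, q, hT'⟩ := distinguished_cocone_triangle e
  -- F K is zero since F e is an iso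
  have hzero : IsZero (F.obj K) := by
    have := Triangle.isZero₃_of_isIso₁ _ (F.map_distinguished _ hT')
      (by change IsIso (F.map e); rw [hFe]; infer_instance)
    simpa [Functor.mapTriangle] using this
  -- f factors through p since e ≫ f = 0
  obtain ⟨h, hh⟩ := Triangle.yoneda_exact₂ _ hT' f hef
  exact ⟨K, p, h, hzero, hh⟩
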